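/- Let λ, μ, θ₁, θ₂, ρ be real numbers and u an integer. If [uρ]_{2π} ≠ u·[ρ]_{2π} and |[uρ]_{2π}| < π/2, then there exists an integer r with |r| ≤ max(1, |u| - 1) such that λ·cos(θ₁ + rρ) + μ·cos(θ₂ - rρ) ≥ 0. -/

import Mathlib

/-- The representative of `a` modulo `b` in the interval `[-b/2, b/2)`. -/
noncomputable def rmod (a b : ℝ) : ℝ := a - b * ⌊a / b + 1 / 2⌋

open Real

lemma rmod_sub (a b : ℝ) : a - rmod a b = b * ⌊a / b + 1 / 2⌋ := by
  simp [rmod]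

lemma rmod_mem (a b : ℝ) (hb : 0 < b) : -(b/2) ≤ rmod a b ∧ rmod a b < b/2 := by
  have h1 := Int.floor_le (a / b + 1 / 2)
  have h2 := Int.lt_floor_add_one (a / b + 1 / 2)
  constructor
  · rw [rmod]
    nlinarith [mul_le_mul_of_nonneg_left h1 hb.le, mul_div_cancel₀ a hb.ne']
  · rw [rmod]
    nlinarith [mul_lt_mul_of_pos_left h2 hb, mul_div_cancel₀ a hb.ne']

lemma rmod_eq (a c : ℝ) (k : ℤ) (hc1 : -π ≤ c) (hc2 : c < π) (h : a - c = 2*π*k) :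
    rmod a (2*π) = c := by
  have hπ := Real.pi_pos
  have hb : (0:ℝ) < 2*π := by linarith
  have ha : a = c + 2*π*k := by linarith
  have key : a / (2*π) + 1/2 = k + (c + π)/(2*π) := by
    rw [ha]; field_simp; ring
  have ht0 : 0 ≤ (c + π)/(2*π) := div_nonneg (by linarith) hb.le
  have ht1 : (c + π)/(2*π) < 1 := (div_lt_one hb).2 (by linarith)
  have hfl : ⌊a / (2*π) + 1/2⌋ = k := by
    rw [key]
    exact Int.floor_eq_iff.mpr ⟨by linarith, by linarith⟩
  rw [rmod, hfl]
  linarith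

lemma cos_rmod (a : ℝ) : Real.cos (rmod a (2*π)) = Real.cos a := by
  have h := rmod_sub a (2*π)
  have : a = rmod a (2*π) + (⌊a / (2*π) + 1/2⌋ : ℤ) * (2*π) := by linarith
  conv_rhs => rw [this]
  rw [Real.cos_add_int_mul_two_pi]

theorem stmt_17 (l m θ₁ θ₂ ρ : ℝ) (u : ℤ)
    (h₁ : rmod ((u : ℝ) * ρ) (2 * Real.pi) ≠ (u : ℝ) * rmod ρ (2 * Real.pi))
    (h₂ : |rmod ((u : ℝ) * ρ) (2 * Real.pi)| < Real.pi / 2) :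
    ∃ r : ℤ, (|r| : ℝ) ≤ max 1 (|u| - 1) ∧
      0 ≤ l * Real.cos (θ₁ + (r : ℝ) * ρ) + m * Real.cos (θ₂ - (r : ℝ) * ρ) := by
  have hπ := Real.pi_pos
  have hb : (0:ℝ) < 2*π := by linarith
  set c := rmod ρ (2*π) with hc
  obtain ⟨hcl, hcu⟩ : -π ≤ c ∧ c < π := by
    have := rmod_mem ρ (2*π) hb
    constructor <;> [linarith [this.1]; linarith [this.2]]
  set k₁ : ℤ := ⌊ρ / (2*π) + 1/2⌋ with hk₁
  have hρc : ρ - c = 2*π*k₁ := by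
    have := rmod_sub ρ (2*π); rw [hc]; linarith
  -- cos (r ρ) = cos (r c) for any integer r
  have hcos : ∀ r : ℤ, Real.cos ((r:ℝ) * ρ) = Real.cos ((r:ℝ) * c) := by
    intro r
    have : (r:ℝ) * ρ = (r:ℝ) * c + (r * k₁ : ℤ) * (2*π) := by push_cast; linear_combination (r:ℝ) * hρc
    rw [this, Real.cos_add_int_mul_two_pi]
  -- u*c is not in [-π, π)
  have hout : ¬ (-π ≤ (u:ℝ)*c ∧ (u:ℝ)*c < π) := by
    rintro ⟨hl, hu⟩
    exact h₁ (rmod_eq _ _ (u*k₁) hl hu (by push_cast; linear_combination (u:ℝ) * hρc))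
  have hbig : π ≤ |(u:ℝ)*c| := by
    rcases abs_cases ((u:ℝ)*c) with ⟨h, _⟩ | ⟨h, _⟩ <;>
      [skip; skip] <;>
    · by_contra hcon
      push_neg at hcon
      exact hout ⟨by linarith, by linarith⟩
  -- |u| ≥ 2
  have hn2 : 2 ≤ u.natAbs := by
    by_contra hlt
    have hu01 : u = 0 ∨ u = 1 ∨ u = -1 := by omega
    rcases hu01 with rfl | rfl | rfl
    · refine hout ⟨by norm_num; linarith, by norm_num; linarith⟩
    · simp at h₁; exact h₁ hc.symm
    · -- u = -1 : rmod (-ρ) determines rmod ρ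
      set d := rmod (((-1:ℤ):ℝ) * ρ) (2*π) with hd
      have hdb : |d| < π/2 := h₂
      obtain ⟨hd1, hd2⟩ := abs_lt.1 hdb
      set k₂ : ℤ := ⌊(((-1:ℤ):ℝ)*ρ) / (2*π) + 1/2⌋ with hk₂
      have hsub : ((-1:ℤ):ℝ)*ρ - d = 2*π*k₂ := by
        have := rmod_sub (((-1:ℤ):ℝ)*ρ) (2*π); rw [hd, hk₂]; linarith
      have hre : rmod ρ (2*π) = -d := by
        refine rmod_eq _ _ (-k₂) (by linarith) (by linarith) ?_
        push_cast at hsub ⊢; linarith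
      apply h₁
      rw [hc, hre]
      push_cast; ring
  set n : ℕ := u.natAbs with hn
  have hc0 : c ≠ 0 := by
    intro h; rw [h] at hbig; simp at hbig; linarith
  set x : ℝ := |c| with hx
  have hx0 : 0 < x := abs_pos.2 hc0
  have hxπ : x ≤ π := abs_le.2 ⟨hcl, hcu.le⟩
  have huabs : |(u:ℝ)| = (n:ℝ) := by
    simp [hn, Nat.cast_natAbs]
  have hnx : π ≤ (n:ℝ) * x := by
    calc π ≤ |(u:ℝ)*c| := hbig
    _ = (n:ℝ) * x := by rw [abs_mul, huabs]
  have hcosu : 0 < Real.cos ((u:ℝ)*ρ) := by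
    rw [← cos_rmod]
    obtain ⟨hl, hr⟩ := abs_lt.1 h₂
    exact Real.cos_pos_of_mem_Ioo (Set.mem_Ioo.mpr ⟨hl, hr⟩)
  -- cos (r x) = cos (r ρ) for naturals r
  have hcosnat : ∀ r : ℕ, Real.cos ((r:ℝ)*x) = Real.cos ((r:ℝ)*ρ) := by
    intro r
    have h1 : (r:ℝ)*x = |(r:ℝ)*c| := by
      rw [abs_mul, Nat.abs_cast]
    rw [h1, Real.cos_abs]
    have := hcos (r:ℤ)
    push_cast at this
    exact this.symm
  -- find r₀ ∈ [1, n-1] with cos (r₀ ρ) ≤ 0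
  obtain ⟨r₀, hr1, hr2, hr3⟩ :
      ∃ r₀ : ℕ, 1 ≤ r₀ ∧ r₀ ≤ n - 1 ∧ Real.cos ((r₀:ℝ)*ρ) ≤ 0 := by
    by_contra hco
    push_neg at hco
    have hpos : ∀ r : ℕ, 1 ≤ r → r ≤ n → 0 < Real.cos ((r:ℝ)*x) := by
      intro r h1 h2
      rw [hcosnat]
      rcases eq_or_lt_of_le h2 with heq | hlt
      · have heq' : r = u.natAbs := heq.trans hn
        rcases Int.natAbs_eq u with h | h
        · have he : ((r:ℝ)) = ((u:ℝ)) := by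
            have hz : (r:ℤ) = u := by omega
            exact_mod_cast hz
          rw [he]; exact hcosu
        · have he : ((r:ℝ)) = -((u:ℝ)) := by
            have hz : (r:ℤ) = -u := by omega
            exact_mod_cast hz
          rw [he]
          have hne : -(u:ℝ) * ρ = -((u:ℝ)*ρ) := by ring
          rw [hne, Real.cos_neg]; exact hcosu
      · exact hco r h1 (by omega)
    have key : ∀ r : ℕ, r ≤ n → (r:ℝ)*x < π/2 := by
      intro r
      induction r with
      | zero => intro _; simp; positivity
      | succ r ih =>
        intro hr
        have h1 : (r:ℝ)*x < π/2 := ih (by omega)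
        have h2 : ((r+1:ℕ):ℝ)*x = (r:ℝ)*x + x := by push_cast; ring
        by_contra hcon
        push_neg at hcon
        have : Real.cos (((r+1:ℕ):ℝ)*x) ≤ 0 :=
          Real.cos_nonpos_of_pi_div_two_le_of_le hcon (by rw [h2]; linarith)
        exact absurd (hpos (r+1) (by omega) hr) (by simpa using this.not_gt)
    have := key n le_rfl
    linarith
  -- the pairing argument
  have hend : ∀ (s : ℝ), Real.cos ((s:ℝ)*ρ) ≤ 0 →
      0 ≤ (l * Real.cos (θ₁ + s*ρ) + m * Real.cos (θ₂ - s*ρ)) +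
          (l * Real.cos (θ₁ - s*ρ) + m * Real.cos (θ₂ + s*ρ)) ∨
      0 ≤ l * Real.cos θ₁ + m * Real.cos θ₂ := by
    intro s hs
    rcases le_or_gt 0 (l * Real.cos θ₁ + m * Real.cos θ₂) with h | h
    · right; exact h
    · left
      have expand : (l * Real.cos (θ₁ + s*ρ) + m * Real.cos (θ₂ - s*ρ)) +
          (l * Real.cos (θ₁ - s*ρ) + m * Real.cos (θ₂ + s*ρ)) =
          2 * Real.cos (s*ρ) * (l * Real.cos θ₁ + m * Real.cos θ₂) := by
        rw [Real.cos_add, Real.cos_sub, Real.cos_add, Real.cos_sub]; ring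
      rw [expand]
      nlinarith
  have hbound : ∀ e : ℤ, e.natAbs = r₀ → (|e| : ℝ) ≤ (max 1 (|u| - 1) : ℤ) := by
    intro e he
    have h1 : |e| ≤ |u| - 1 := by
      rw [Int.abs_eq_natAbs, Int.abs_eq_natAbs]; omega
    have h2 : |e| ≤ max 1 (|u| - 1) := h1.trans (le_max_right _ _)
    exact_mod_cast h2
  rcases hend (r₀:ℝ) hr3 with hsum | h0
  · rcases le_or_gt 0 (l * Real.cos (θ₁ + (r₀:ℝ)*ρ) + m * Real.cos (θ₂ - (r₀:ℝ)*ρ)) with h | h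
    · refine ⟨(r₀:ℤ), ?_, ?_⟩
      · exact_mod_cast hbound (r₀:ℤ) (by omega)
      · push_cast; exact h
    · refine ⟨-(r₀:ℤ), ?_, ?_⟩
      · exact_mod_cast hbound (-(r₀:ℤ)) (by omega)
      · have e1 : θ₁ + -(((r₀:ℤ)):ℝ)*ρ = θ₁ - (r₀:ℝ)*ρ := by push_cast; ring
        have e2 : θ₂ - -(((r₀:ℤ)):ℝ)*ρ = θ₂ + (r₀:ℝ)*ρ := by push_cast; ring
        rw [Int.cast_neg, e1, e2]
        linarith
  · refine ⟨0, ?_, ?_⟩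
    · have : (0:ℤ) ≤ max 1 (|u| - 1) := le_trans (by norm_num) (le_max_left _ _)
      simpa using this
    · simpa using h0
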